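/- Let n ≥ 2 and fix 2 ≤ j ≤ n. Let f, f_1,…,f_m ∈ ℝ[x_1,…,x_n] be polynomials each belonging to the ℝ-subalgebra generated by {s_i : 2 ≤ i ≤ n, i ≠ j}, and let S = {x ∈ ℝ^n : x_1 + ⋯ + x_n = 0, f_1(x) ≥ 0, …, f_m(x) ≥ 0}. Then: (i) S is nonempty if and only if S contains a point x with x_i = x_{i'} for some indices i ≠ i'; and (ii) f(x) ≥ 0 for all x ∈ S if and only if f(x) ≥ 0 for all x ∈ S having two equal coordinates x_i = x_{i'}, i ≠ i'. -/

import Mathlib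

open MvPolynomial


noncomputable def psumDeriv (n k : ℕ) (x : Fin n → ℝ) : (Fin n → ℝ) →L[ℝ] ℝ :=
  ∑ t, ((k : ℝ) * x t ^ (k - 1)) • ContinuousLinearMap.proj t

lemma hasStrictFDerivAt_powsum (n k : ℕ) (x : Fin n → ℝ) :
    HasStrictFDerivAt (fun y : Fin n → ℝ => ∑ t, y t ^ k) (psumDeriv n k x) x := by
  apply HasStrictFDerivAt.fun_sum
  intro t _
  have hproj : HasStrictFDerivAt (fun y : Fin n → ℝ => y t)
      ((ContinuousLinearMap.proj t : (Fin n → ℝ) →L[ℝ] ℝ)) x := by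
    exact (ContinuousLinearMap.proj t : (Fin n → ℝ) →L[ℝ] ℝ).hasStrictFDerivAt
  exact (hasStrictDerivAt_pow k (x t)).comp_hasStrictFDerivAt x hproj

lemma psumDeriv_single (n k : ℕ) (x : Fin n → ℝ) (t : Fin n) :
    psumDeriv n k x (Pi.single t 1) = (k : ℝ) * x t ^ (k - 1) := by
  simp [psumDeriv, ContinuousLinearMap.sum_apply, Pi.single_apply]

lemma exists_eq_coords (n : ℕ) (hn : 2 ≤ n) (j : ℕ) (hj2 : 2 ≤ j) (hjn : j ≤ n)
    (x₀ : Fin n → ℝ) :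
    ∃ x : Fin n → ℝ, (∀ i, 1 ≤ i → i ≤ n → i ≠ j → ∑ t, x t ^ i = ∑ t, x₀ t ^ i) ∧
      ∃ i i' : Fin n, i ≠ i' ∧ x i = x i' := by
  classical
  set c : Fin (n - 1) → ℕ := fun l => if (l : ℕ) + 1 < j then (l : ℕ) + 1 else (l : ℕ) + 2
    with hcdef
  have hc1 : ∀ l, 1 ≤ c l := by intro l; simp only [c]; split <;> omega
  have hcn : ∀ l, c l ≤ n := by
    intro l; have := l.isLt; simp only [c]; split <;> omega
  have hcj : ∀ l, c l ≠ j := by intro l; simp only [c]; split <;> omega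
  have hcinj : Function.Injective c := by
    intro a b hab
    have ha := a.isLt; have hb := b.isLt
    simp only [c] at hab
    have : (a : ℕ) = (b : ℕ) := by split_ifs at hab <;> omega
    exact Fin.ext this
  have hcsurj : ∀ i, 1 ≤ i → i ≤ n → i ≠ j → ∃ l : Fin (n - 1), c l = i := by
    intro i h1 h2 h3
    rcases lt_or_gt_of_ne h3 with h | h
    · refine ⟨⟨i - 1, by omega⟩, ?_⟩
      simp only [c]; split <;> omega
    · refine ⟨⟨i - 2, by omega⟩, ?_⟩
      simp only [c]; split <;> omega
  set φ : ℕ → (Fin n → ℝ) → ℝ := fun k y => ∑ t, y t ^ k with hφdef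
  have hφcont : ∀ k, Continuous (φ k) := fun k =>
    continuous_finset_sum _ fun t _ => (continuous_apply t).pow k
  set V : Set (Fin n → ℝ) := {y | ∀ l, φ (c l) y = φ (c l) x₀} with hVdef
  have hVclosed : IsClosed V := by
    have : V = ⋂ l, {y | φ (c l) y = φ (c l) x₀} := by
      ext y; simp [V, Set.mem_iInter]
    rw [this]
    exact isClosed_iInter fun l => isClosed_eq (hφcont _) continuous_const
  have hx₀V : x₀ ∈ V := fun l => rfl
  have hball : ∀ C : ℝ, ∀ y : Fin n → ℝ, φ 2 y ≤ C → y ∈ Metric.closedBall 0 (Real.sqrt C) := by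
    intro C y hy
    rw [Metric.mem_closedBall, dist_zero_right]
    rw [pi_norm_le_iff_of_nonneg (Real.sqrt_nonneg C)]
    intro t
    rw [Real.norm_eq_abs]
    apply Real.abs_le_sqrt
    calc y t ^ 2 ≤ ∑ t', y t' ^ 2 :=
          Finset.single_le_sum (f := fun t' => y t' ^ 2) (fun t' _ => sq_nonneg _) (Finset.mem_univ t)
      _ ≤ C := hy
  -- find an extremum of φ j on V
  obtain ⟨x, hxV, hextr⟩ : ∃ x ∈ V, IsLocalExtrOn (φ j) V x := by
    rcases eq_or_lt_of_le hj2 with h2 | h3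
    · -- j = 2 : minimize φ 2 on V
      set K := V ∩ {y | φ 2 y ≤ φ 2 x₀} with hK
      have hKc : IsCompact K :=
        Metric.isCompact_of_isClosed_isBounded
          (hVclosed.inter (isClosed_le (hφcont 2) continuous_const))
          (Metric.isBounded_closedBall.subset fun y hy => hball _ y hy.2)
      obtain ⟨x, hxK, hmin⟩ := hKc.exists_isMinOn ⟨x₀, hx₀V, show φ 2 x₀ ≤ φ 2 x₀ from le_rfl⟩ ((hφcont j).continuousOn)
      refine ⟨x, hxK.1, Or.inl (IsMinOn.localize ?_)⟩
      rw [isMinOn_iff]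
      intro y hy
      by_cases hc2 : φ 2 y ≤ φ 2 x₀
      · exact (isMinOn_iff.mp hmin) y ⟨hy, hc2⟩
      · have h1 : φ j x ≤ φ j x₀ := (isMinOn_iff.mp hmin) x₀ ⟨hx₀V, show φ 2 x₀ ≤ φ 2 x₀ from le_rfl⟩
        have h2' : φ j x₀ ≤ φ j y := by rw [← h2] at *; linarith [le_of_not_ge hc2]
        linarith
    · -- 2 < j : V is compact, maximize φ j
      obtain ⟨l2, hl2⟩ := hcsurj 2 (by omega) hn (by omega)
      have hVK : IsCompact V :=
        Metric.isCompact_of_isClosed_isBounded hVclosed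
          (Metric.isBounded_closedBall.subset fun y hy => by
            apply hball (φ 2 x₀) y
            have := hy l2
            rw [hl2] at this
            exact le_of_eq this)
      obtain ⟨x, hxV, hmax⟩ := hVK.exists_isMaxOn ⟨x₀, hx₀V⟩ ((hφcont j).continuousOn)
      exact ⟨x, hxV, Or.inr hmax.localize⟩
  -- rewrite V in terms of x
  have hVeq : V = {y | ∀ l, φ (c l) y = φ (c l) x} := by
    ext y
    constructor
    · intro hy l; rw [hy l, ← hxV l]
    · intro hy l; rw [hy l, hxV l]
  rw [hVeq] at hextr
  obtain ⟨Λ, Λ₀, hne, hsum⟩ :=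
    hextr.exists_multipliers_of_hasStrictFDerivAt
      (f' := fun l => psumDeriv n (c l) x)
      (fun l => hasStrictFDerivAt_powsum n (c l) x) (hasStrictFDerivAt_powsum n j x)
  have heval : ∀ t : Fin n,
      (∑ l, Λ l * ((c l : ℝ) * x t ^ (c l - 1))) + Λ₀ * ((j : ℝ) * x t ^ (j - 1)) = 0 := by
    intro t
    have h := congrArg (fun L : (Fin n → ℝ) →L[ℝ] ℝ => L (Pi.single t 1)) hsum
    simpa [ContinuousLinearMap.add_apply, ContinuousLinearMap.sum_apply,
      ContinuousLinearMap.smul_apply, psumDeriv_single, smul_eq_mul] using h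
  -- the polynomial whose roots include all coordinates of x
  set q : Polynomial ℝ :=
      Polynomial.C Λ₀ * (Polynomial.C (j : ℝ) * Polynomial.X ^ (j - 1)) +
        ∑ l, Polynomial.C (Λ l) * (Polynomial.C ((c l : ℝ)) * Polynomial.X ^ (c l - 1))
    with hq
  have hqroot : ∀ t, Polynomial.eval (x t) q = 0 := by
    intro t
    simp only [hq, Polynomial.eval_add, Polynomial.eval_mul, Polynomial.eval_C,
      Polynomial.eval_pow, Polynomial.eval_X, Polynomial.eval_finset_sum]
    rw [add_comm]
    exact heval t
  have hq0 : q ≠ 0 := by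
    intro h0
    by_cases hΛ₀ : Λ₀ = 0
    · have hΛ : Λ ≠ 0 := by
        intro h
        exact hne (by rw [h, hΛ₀]; rfl)
      obtain ⟨l₀, hl₀⟩ := Function.ne_iff.mp hΛ
      have hco : q.coeff (c l₀ - 1) = Λ l₀ * (c l₀ : ℝ) := by
        rw [hq, Polynomial.coeff_add, Polynomial.finset_sum_coeff]
        have hA : (Polynomial.C Λ₀ * (Polynomial.C (j : ℝ) * Polynomial.X ^ (j - 1))).coeff
            (c l₀ - 1) = 0 := by
          have hcond : ¬ (c l₀ - 1 = j - 1) := by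
            have := hcj l₀; have := hc1 l₀; omega
          simp [Polynomial.coeff_C_mul, Polynomial.coeff_X_pow, hcond]
        rw [hA, zero_add]
        rw [Finset.sum_eq_single l₀]
        · simp [Polynomial.coeff_C_mul, Polynomial.coeff_X_pow]
        · intro l _ hll
          have hcond : ¬ (c l₀ - 1 = c l - 1) := by
            intro hh
            have h1 := hc1 l; have h2 := hc1 l₀
            have : c l = c l₀ := by omega
            exact hll (hcinj this)
          simp [Polynomial.coeff_C_mul, Polynomial.coeff_X_pow, hcond]
        · intro h; exact absurd (Finset.mem_univ l₀) h
      rw [h0] at hco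
      simp only [Polynomial.coeff_zero] at hco
      have : (c l₀ : ℝ) ≠ 0 := by
        have := hc1 l₀
        exact_mod_cast by omega
      exact hl₀ (by
        rcases mul_eq_zero.mp hco.symm with h | h
        · exact h
        · exact absurd h this)
    · have hco : q.coeff (j - 1) = Λ₀ * (j : ℝ) := by
        rw [hq, Polynomial.coeff_add, Polynomial.finset_sum_coeff]
        have hA : (Polynomial.C Λ₀ * (Polynomial.C (j : ℝ) * Polynomial.X ^ (j - 1))).coeff
            (j - 1) = Λ₀ * (j : ℝ) := by
          simp [Polynomial.coeff_C_mul, Polynomial.coeff_X_pow]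
        rw [hA, Finset.sum_eq_zero, add_zero]
        intro l _
        have hcond : ¬ (j - 1 = c l - 1) := by
          have := hcj l; have := hc1 l; omega
        simp [Polynomial.coeff_C_mul, Polynomial.coeff_X_pow, hcond]
      rw [h0] at hco
      simp only [Polynomial.coeff_zero] at hco
      have hjne : (j : ℝ) ≠ 0 := by exact_mod_cast by omega
      rcases mul_eq_zero.mp hco.symm with h | h
      · exact hΛ₀ h
      · exact hjne h
  have hdeg : q.natDegree ≤ n - 1 := by
    rw [hq]
    apply le_trans (Polynomial.natDegree_add_le _ _)
    apply max_le
    · refine le_trans (Polynomial.natDegree_C_mul_le _ _) ?_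
      refine le_trans (Polynomial.natDegree_C_mul_le _ _) ?_
      rw [Polynomial.natDegree_X_pow]
      omega
    · apply Polynomial.natDegree_sum_le_of_forall_le
      intro l _
      refine le_trans (Polynomial.natDegree_C_mul_le _ _) ?_
      refine le_trans (Polynomial.natDegree_C_mul_le _ _) ?_
      rw [Polynomial.natDegree_X_pow]
      have := hcn l
      omega
  have hcard : q.roots.toFinset.card < (Finset.univ : Finset (Fin n)).card := by
    have h1 : q.roots.toFinset.card ≤ Multiset.card q.roots := Multiset.toFinset_card_le _
    have h2 : Multiset.card q.roots ≤ q.natDegree := Polynomial.card_roots' q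
    rw [Finset.card_univ, Fintype.card_fin]
    omega
  obtain ⟨i, -, i', -, hii, heq⟩ :=
    Finset.exists_ne_map_eq_of_card_lt_of_maps_to hcard
      (f := fun t => x t)
      (fun t _ => Multiset.mem_toFinset.mpr (Polynomial.mem_roots'.mpr ⟨hq0, hqroot t⟩))
  refine ⟨x, ?_, i, i', hii, heq⟩
  intro i0 h1 h2 h3
  obtain ⟨l, rfl⟩ := hcsurj i0 h1 h2 h3
  exact hxV l

lemma eval_eq_of_powsums (n j : ℕ) (x y : Fin n → ℝ)
    (hsums : ∀ i, 2 ≤ i → i ≤ n → i ≠ j → ∑ t, y t ^ i = ∑ t, x t ^ i)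
    {g : MvPolynomial (Fin n) ℝ}
    (hg : g ∈ Algebra.adjoin ℝ {p : MvPolynomial (Fin n) ℝ |
      ∃ i, 2 ≤ i ∧ i ≤ n ∧ i ≠ j ∧ p = psum (Fin n) ℝ i}) :
    eval y g = eval x g := by
  induction hg using Algebra.adjoin_induction with
  | mem p hp =>
      obtain ⟨i, h1, h2, h3, rfl⟩ := hp
      simpa [psum, map_sum] using hsums i h1 h2 h3
  | algebraMap r => simp [MvPolynomial.algebraMap_eq]
  | add a b _ _ ha hb => simp [ha, hb]
  | mul a b _ _ ha hb => simp [ha, hb]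

/-- Corollary 3.6 for type `A_{n-1}`: let `f, f₁, …, f_m` be polynomials in the power
sums `s_i`, `2 ≤ i ≤ n`, `i ≠ j`, and let
`S = {x : x₁ + ⋯ + xₙ = 0, f₁(x) ≥ 0, …, f_m(x) ≥ 0}`. Then (i) `S` is nonempty iff
it contains a point with two equal coordinates, and (ii) `f ≥ 0` on `S` iff `f ≥ 0` on
the points of `S` having two equal coordinates. -/
theorem semialgebraic_all_but_one_An
    (n : ℕ) (hn : 2 ≤ n) (j : ℕ) (hj2 : 2 ≤ j) (hjn : j ≤ n)
    (m : ℕ) (f : MvPolynomial (Fin n) ℝ) (fs : Fin m → MvPolynomial (Fin n) ℝ)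
    (hmem : ∀ g ∈ insert f (Set.range fs), g ∈ Algebra.adjoin ℝ
      {p : MvPolynomial (Fin n) ℝ |
        ∃ i, 2 ≤ i ∧ i ≤ n ∧ i ≠ j ∧ p = psum (Fin n) ℝ i}) :
    (((∃ x : Fin n → ℝ, (∑ t, x t) = 0 ∧ ∀ l, 0 ≤ eval x (fs l)) ↔
      (∃ x : Fin n → ℝ, (∑ t, x t) = 0 ∧ (∀ l, 0 ≤ eval x (fs l)) ∧
        ∃ i i' : Fin n, i ≠ i' ∧ x i = x i'))) ∧
    ((∀ x : Fin n → ℝ, (∑ t, x t) = 0 → (∀ l, 0 ≤ eval x (fs l)) →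
        0 ≤ eval x f) ↔
      (∀ x : Fin n → ℝ, (∑ t, x t) = 0 → (∀ l, 0 ≤ eval x (fs l)) →
        (∃ i i' : Fin n, i ≠ i' ∧ x i = x i') → 0 ≤ eval x f)) := by
  have main : ∀ x : Fin n → ℝ, (∑ t, x t) = 0 →
      ∃ y : Fin n → ℝ, (∑ t, y t) = 0 ∧
        (∀ g ∈ insert f (Set.range fs), eval y g = eval x g) ∧
        ∃ i i' : Fin n, i ≠ i' ∧ y i = y i' := by
    intro x hx0
    obtain ⟨y, hy, hii⟩ := exists_eq_coords n hn j hj2 hjn x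
    have hsum1 : (∑ t, y t) = ∑ t, x t := by
      have := hy 1 le_rfl (by omega) (by omega)
      simpa using this
    refine ⟨y, by rw [hsum1, hx0], ?_, hii⟩
    intro g hg
    exact eval_eq_of_powsums n j x y (fun i h1 h2 h3 => hy i (by omega) h2 h3) (hmem g hg)
  constructor
  · constructor
    · rintro ⟨x, hx0, hxfs⟩
      obtain ⟨y, hy0, hyeq, hii⟩ := main x hx0
      refine ⟨y, hy0, fun l => ?_, hii⟩
      rw [hyeq (fs l) (Set.mem_insert_iff.mpr (Or.inr ⟨l, rfl⟩))]
      exact hxfs l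
    · rintro ⟨x, hx0, hxfs, -⟩
      exact ⟨x, hx0, hxfs⟩
  · constructor
    · intro h x hx0 hxfs _
      exact h x hx0 hxfs
    · intro h x hx0 hxfs
      obtain ⟨y, hy0, hyeq, hii⟩ := main x hx0
      have hf : eval y f = eval x f := hyeq f (Set.mem_insert _ _)
      rw [← hf]
      refine h y hy0 (fun l => ?_) hii
      rw [hyeq (fs l) (Set.mem_insert_iff.mpr (Or.inr ⟨l, rfl⟩))]
      exact hxfs l
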